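/- Let Λ ∈ ℝ^{J×K} with J ≥ K and suppose the top K×K block Λ_{[1:K,:]} is lower-triangular with nonzero diagonal entries. If G ∈ ℝ^{K×K} is orthogonal and Λ G also has lower-triangular top K×K block, then G is diagonal with entries ±1. -/
import Mathlib


open Matrix

theorem stmt_9 {J K : ℕ} (hJK : K ≤ J) (Λ : Matrix (Fin J) (Fin K) ℝ)
    (G : Matrix (Fin K) (Fin K) ℝ)
    (hlow : ∀ i j : Fin K, i < j → Λ (Fin.castLE hJK i) j = 0)
    (hdiagne : ∀ i : Fin K, Λ (Fin.castLE hJK i) i ≠ 0)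
    (horth : Gᵀ * G = 1)
    (hlow' : ∀ i j : Fin K, i < j → (Λ * G) (Fin.castLE hJK i) j = 0) :
    G.IsDiag ∧ ∀ i : Fin K, G i i = 1 ∨ G i i = -1 := by
  -- Step 1: G is lower triangular
  have hG_low : ∀ i : Fin K, ∀ j : Fin K, i < j → G i j = 0 := by
    have main : ∀ n : ℕ, ∀ i : Fin K, i.val = n → ∀ j : Fin K, i < j → G i j = 0 := by
      intro n
      induction n using Nat.strongRecOn with
      | ind n IHn =>
      intro i hi j hij
      have IH : ∀ k : Fin K, k < i → ∀ j : Fin K, k < j → G k j = 0 :=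
        fun k hk => IHn k.val (hi ▸ hk) k rfl
      have h0 := hlow' i j hij
      rw [Matrix.mul_apply] at h0
      have hsum : ∑ k, Λ (Fin.castLE hJK i) k * G k j
          = Λ (Fin.castLE hJK i) i * G i j := by
        apply Finset.sum_eq_single i
        · intro k _ hk
          rcases lt_or_gt_of_ne hk with hki | hik
          · rw [IH k hki j (hki.trans hij), mul_zero]
          · rw [hlow i k hik, zero_mul]
        · intro h; exact absurd (Finset.mem_univ i) h
      rw [hsum] at h0
      exact (mul_eq_zero.mp h0).resolve_left (hdiagne i)
    exact fun i => main i.val i rfl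
  have hGG : G * Gᵀ = 1 := mul_eq_one_comm.mp horth
  -- Step 2: strong induction on rows
  have key : ∀ i : Fin K, (∀ k : Fin K, k < i → G i k = 0) ∧
      (G i i = 1 ∨ G i i = -1) := by
    have main : ∀ n : ℕ, ∀ i : Fin K, i.val = n → (∀ k : Fin K, k < i → G i k = 0) ∧
        (G i i = 1 ∨ G i i = -1) := by
      intro n
      induction n using Nat.strongRecOn with
      | ind n IHn =>
      intro i hi
      have IH : ∀ k : Fin K, k < i → (∀ k' : Fin K, k' < k → G k k' = 0) ∧
          (G k k = 1 ∨ G k k = -1) :=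
        fun k hk => IHn k.val (hi ▸ hk) k rfl
      have hA : ∀ k : Fin K, k < i → G i k = 0 := by
        intro k hk
        have h0 := congrFun (congrFun hGG i) k
        rw [Matrix.mul_apply, Matrix.one_apply_ne (ne_of_gt hk)] at h0
        have hsum : ∑ j, G i j * Gᵀ j k = G i k * G k k := by
          apply Finset.sum_eq_single k
          · intro j _ hj
            rcases lt_or_gt_of_ne hj with hjk | hkj
            · rw [Matrix.transpose_apply, (IH k hk).1 j hjk, mul_zero]
            · rw [Matrix.transpose_apply, hG_low k j hkj, mul_zero]
          · intro h; exact absurd (Finset.mem_univ k) h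
        rw [hsum] at h0
        have hkk : G k k ≠ 0 := by
          rcases (IH k hk).2 with h | h <;> rw [h] <;> norm_num
        exact (mul_eq_zero.mp h0).resolve_right hkk
      refine ⟨hA, ?_⟩
      have h1 := congrFun (congrFun hGG i) i
      rw [Matrix.mul_apply, Matrix.one_apply_eq] at h1
      have hsum : ∑ j, G i j * Gᵀ j i = G i i * G i i := by
        apply Finset.sum_eq_single i
        · intro j _ hj
          rcases lt_or_gt_of_ne hj with hji | hij
          · rw [hA j hji, zero_mul]
          · rw [hG_low i j hij, zero_mul]
        · intro h; exact absurd (Finset.mem_univ i) h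
      rw [hsum] at h1
      exact mul_self_eq_one_iff.mp h1
    exact fun i => main i.val i rfl
  constructor
  · intro i j hij
    rcases lt_or_gt_of_ne hij with h | h
    · exact hG_low i j h
    · exact (key i).1 j h
  · exact fun i => (key i).2
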